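/- (De Finetti's consistency theorem, general case) Let A be any (finite or infinite) boolean algebra, E = {h₁,…,h_m} a finite subset of A, and β : E → [0,1]. Then β extends to a state of A if and only if there is no function s : E → ℝ such that Σⱼ s(hⱼ)(β(hⱼ) − η(hⱼ)) < 0 for every boolean homomorphism η : A → {0,1}. -/

import Mathlib

/-- `f` is a homomorphism of boolean algebras. -/
def IsBAHom {A B : Type*} [BooleanAlgebra A] [BooleanAlgebra B] (f : A → B) : Prop :=
  (∀ x : A, f xᶜ = (f x)ᶜ) ∧ (∀ x y : A, f (x ⊓ y) = f x ⊓ f y) ∧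
  (∀ x y : A, f (x ⊔ y) = f x ⊔ f y)

/-- A state of a boolean algebra: a `[0,1]`-valued, normalized, finitely additive
function. -/
def IsState {A : Type*} [BooleanAlgebra A] (σ : A → ℝ) : Prop :=
  (∀ x : A, 0 ≤ σ x ∧ σ x ≤ 1) ∧ σ ⊤ = 1 ∧
  ∀ x y : A, x ⊓ y = ⊥ → σ (x ⊔ y) = σ x + σ y

section Ultra
variable {A : Type*} [BooleanAlgebra A]

theorem exists_hom_of_ne_bot {a : A} (ha : a ≠ ⊥) :
    ∃ η : A → Bool, IsBAHom η ∧ η a = true := by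
  classical
  set S : Set (Set A) :=
    {F | ⊥ ∉ F ∧ a ∈ F ∧ (∀ x ∈ F, ∀ y, x ≤ y → y ∈ F) ∧ ∀ x ∈ F, ∀ y ∈ F, x ⊓ y ∈ F} with hS
  have hbase : {x : A | a ≤ x} ∈ S := by
    refine ⟨fun h => ha (le_bot_iff.mp h), le_refl a, fun x hx y hxy => le_trans hx hxy,
      fun x hx y hy => le_inf hx hy⟩
  have hchainS : ∀ c ⊆ S, IsChain (fun x1 x2 => x1 ⊆ x2) c → c.Nonempty →
      ∃ ub ∈ S, ∀ s ∈ c, s ⊆ ub := by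
    intro c hcS hchain hcne
    refine ⟨⋃₀ c, ⟨?_, ?_, ?_, ?_⟩, fun s hs => Set.subset_sUnion_of_mem hs⟩
    · rintro ⟨F, hF, hbF⟩; exact (hcS hF).1 hbF
    · obtain ⟨F, hF⟩ := hcne; exact ⟨F, hF, (hcS hF).2.1⟩
    · rintro x ⟨F, hF, hxF⟩ y hxy; exact ⟨F, hF, (hcS hF).2.2.1 x hxF y hxy⟩
    · rintro x ⟨F1, hF1, hx⟩ y ⟨F2, hF2, hy⟩
      rcases hchain.total hF1 hF2 with h | h
      · exact ⟨F2, hF2, (hcS hF2).2.2.2 x (h hx) y hy⟩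
      · exact ⟨F1, hF1, (hcS hF1).2.2.2 x hx y (h hy)⟩
  obtain ⟨F, hsub, ⟨hbot, haF, hup, hinf⟩, hmax⟩ := zorn_subset_nonempty S hchainS _ hbase
  have hultra : ∀ x : A, x ∉ F → xᶜ ∈ F := by
    intro x hx
    by_contra hxc
    set G : Set A := {y | ∃ z ∈ F, z ⊓ x ≤ y} with hG
    have hGS : G ∈ S := by
      refine ⟨?_, ⟨a, haF, inf_le_left⟩, fun u hu y huy => ?_, fun u hu v hv => ?_⟩
      · rintro ⟨z, hz, hzx⟩
        rw [le_bot_iff] at hzx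
        exact hxc (hup z hz xᶜ (le_compl_iff_disjoint_right.mpr (disjoint_iff.mpr hzx)))
      · obtain ⟨z, hz, hzu⟩ := hu; exact ⟨z, hz, hzu.trans huy⟩
      · obtain ⟨z1, hz1, h1⟩ := hu; obtain ⟨z2, hz2, h2⟩ := hv
        exact ⟨z1 ⊓ z2, hinf _ hz1 _ hz2, by
          calc z1 ⊓ z2 ⊓ x = (z1 ⊓ x) ⊓ (z2 ⊓ x) := by rw [inf_inf_distrib_right]
            _ ≤ u ⊓ v := inf_le_inf h1 h2⟩
    have hFG : F ⊆ G := fun z hz => ⟨z, hz, inf_le_left⟩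
    exact hx (hmax hGS hFG ⟨a, haF, inf_le_right⟩)
  have hnotboth : ∀ x : A, x ∈ F → xᶜ ∈ F → False := by
    intro x h1 h2
    exact hbot (by simpa using hinf x h1 xᶜ h2)
  refine ⟨fun x => if x ∈ F then true else false, ⟨?_, ?_, ?_⟩, if_pos haF⟩
  · intro x
    by_cases hx : x ∈ F
    · have : xᶜ ∉ F := fun h => hnotboth x hx h
      simp [hx, this]
    · simp [hx, hultra x hx]
  · intro x y
    by_cases hx : x ∈ F <;> by_cases hy : y ∈ F
    · simp [hx, hy, hinf x hx y hy]
    · have : x ⊓ y ∉ F := fun h => hy (hup _ h y inf_le_right)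
      simp [hx, hy, this]
    · have : x ⊓ y ∉ F := fun h => hx (hup _ h x inf_le_left)
      simp [hx, hy, this]
    · have : x ⊓ y ∉ F := fun h => hx (hup _ h x inf_le_left)
      simp [hx, hy, this]
  · intro x y
    by_cases hx : x ∈ F
    · simp [hx, hup x hx (x ⊔ y) le_sup_left]
    by_cases hy : y ∈ F
    · simp [hx, hy, hup y hy (x ⊔ y) le_sup_right]
    · have : x ⊔ y ∉ F := by
        intro h
        have h2 : xᶜ ⊓ yᶜ ∈ F := hinf _ (hultra x hx) _ (hultra y hy)
        have h3 : (x ⊔ y) ⊓ (xᶜ ⊓ yᶜ) ∈ F := hinf _ h _ h2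
        refine hbot ?_
        have he : (x ⊔ y) ⊓ (xᶜ ⊓ yᶜ) = ⊥ := by
          have := inf_compl_eq_bot (a := x ⊔ y)
          rwa [compl_sup] at this
        rwa [he] at h3
      simp [hx, hy, this]

end Ultra

section Hom
variable {A : Type*} [BooleanAlgebra A] {η : A → Bool}

theorem IsBAHom.bot_eq (h : IsBAHom η) : η ⊥ = false := by
  have h1 := h.2.1 ⊥ ⊥ᶜ
  rw [inf_compl_eq_bot, h.1 ⊥] at h1
  cases hb : η ⊥
  · rfl
  · rw [hb] at h1; exact absurd h1 (by decide)

theorem IsBAHom.top_eq (h : IsBAHom η) : η ⊤ = true := by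
  have h1 := h.1 ⊥
  rw [compl_bot, h.bot_eq] at h1
  simpa using h1

theorem IsBAHom.mono_true (h : IsBAHom η) {x y : A} (hxy : x ≤ y) (hx : η x = true) :
    η y = true := by
  have h1 := h.2.1 x y
  rw [inf_eq_left.mpr hxy, hx] at h1
  cases hy : η y
  · rw [hy] at h1; exact absurd h1 (by decide)
  · rfl

end Hom

section State
variable {A : Type*} [BooleanAlgebra A] {σ : A → ℝ}

theorem IsState.bot_eq (hσ : IsState σ) : σ ⊥ = 0 := by
  have := hσ.2.2 ⊥ ⊥ (by simp)
  simp only [sup_idem] at this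
  linarith

theorem IsState.split (hσ : IsState σ) (y h : A) : σ y = σ (y ⊓ h) + σ (y ⊓ hᶜ) := by
  have hd : (y ⊓ h) ⊓ (y ⊓ hᶜ) = ⊥ :=
    le_antisymm (le_trans (inf_le_inf inf_le_right inf_le_right) (by simp)) bot_le
  have hu : (y ⊓ h) ⊔ (y ⊓ hᶜ) = y := by rw [← inf_sup_left]; simp
  rw [← hu, hσ.2.2 _ _ hd, hu]

theorem state_sum_atoms [DecidableEq A] (hσ : IsState σ) (E : Finset A) :
    ∀ x : A, σ x = ∑ S ∈ E.powerset,
      σ (x ⊓ (S.inf id ⊓ (E \ S).inf Compl.compl)) := by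
  induction E using Finset.induction_on with
  | empty => intro x; simp
  | @insert h0 E h0E ih =>
    intro x
    have hterm : ∀ S ∈ E.powerset,
          σ (x ⊓ ((insert h0 S).inf id ⊓ ((insert h0 E \ insert h0 S)).inf Compl.compl))
          + σ (x ⊓ (S.inf id ⊓ ((insert h0 E \ S)).inf Compl.compl))
          = σ (x ⊓ (S.inf id ⊓ (E \ S).inf Compl.compl)) := by
        intro S hS
        rw [Finset.mem_powerset] at hS
        have h0S : h0 ∉ S := fun hc => h0E (hS hc)
        have e1 : insert h0 E \ insert h0 S = E \ S := by
          ext a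
          simp only [Finset.mem_sdiff, Finset.mem_insert]
          constructor
          · rintro ⟨ha | ha, hb⟩
            · exact absurd (Or.inl ha) hb
            · exact ⟨ha, fun hc => hb (Or.inr hc)⟩
          · rintro ⟨ha, hb⟩
            refine ⟨Or.inr ha, ?_⟩
            rintro (rfl | hc)
            · exact h0E ha
            · exact hb hc
        have e2 : insert h0 E \ S = insert h0 (E \ S) :=
          Finset.insert_sdiff_of_notMem _ h0S
        rw [e1, e2, Finset.inf_insert, Finset.inf_insert]
        have l1 : x ⊓ (id h0 ⊓ S.inf id ⊓ (E \ S).inf Compl.compl)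
            = (x ⊓ (S.inf id ⊓ (E \ S).inf Compl.compl)) ⊓ h0 := by
          simp only [id]; ac_rfl
        have l2 : x ⊓ (S.inf id ⊓ (h0ᶜ ⊓ (E \ S).inf Compl.compl))
            = (x ⊓ (S.inf id ⊓ (E \ S).inf Compl.compl)) ⊓ h0ᶜ := by
          ac_rfl
        rw [l1, l2]
        exact (hσ.split _ h0).symm
    have hdis : Disjoint E.powerset (Finset.image (insert h0) E.powerset) := by
      rw [Finset.disjoint_left]
      intro S hS hS'
      obtain ⟨T, hT, rfl⟩ := Finset.mem_image.mp hS'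
      exact h0E (Finset.mem_powerset.mp hS (Finset.mem_insert_self h0 T))
    have hinj : ∀ T1 ∈ E.powerset, ∀ T2 ∈ E.powerset,
        insert h0 T1 = insert h0 T2 → T1 = T2 := by
      intro T1 h1 T2 h2 he
      have n1 : h0 ∉ T1 := fun hc => h0E (Finset.mem_powerset.mp h1 hc)
      have n2 : h0 ∉ T2 := fun hc => h0E (Finset.mem_powerset.mp h2 hc)
      rw [← Finset.erase_insert n1, ← Finset.erase_insert n2, he]
    rw [Finset.powerset_insert, Finset.sum_union hdis, Finset.sum_image hinj,
      ← Finset.sum_add_distrib, ih x]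
    refine Finset.sum_congr rfl fun S hS => ?_
    rw [add_comm]
    exact (hterm S hS).symm

theorem state_total [DecidableEq A] (hσ : IsState σ) (E : Finset A) :
    ∑ S ∈ E.powerset, σ (S.inf id ⊓ (E \ S).inf Compl.compl) = 1 := by
  have h := state_sum_atoms hσ E ⊤
  simp only [top_inf_eq] at h
  rw [← h, hσ.2.1]

theorem state_apply_mem [DecidableEq A] (hσ : IsState σ) (E : Finset A) {h : A}
    (hh : h ∈ E) :
    σ h = ∑ S ∈ E.powerset,
      (if h ∈ S then σ (S.inf id ⊓ (E \ S).inf Compl.compl) else 0) := by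
  rw [state_sum_atoms hσ E h]
  refine Finset.sum_congr rfl fun S hS => ?_
  by_cases hm : h ∈ S
  · rw [if_pos hm]
    congr 1
    rw [inf_eq_right]
    exact le_trans inf_le_left (Finset.inf_le hm)
  · rw [if_neg hm]
    have hmem : h ∈ E \ S := Finset.mem_sdiff.mpr ⟨hh, hm⟩
    have hle : (S.inf id ⊓ (E \ S).inf Compl.compl) ≤ hᶜ :=
      le_trans inf_le_right (Finset.inf_le hmem)
    have hb : h ⊓ (S.inf id ⊓ (E \ S).inf Compl.compl) = ⊥ :=
      le_antisymm (le_trans (inf_le_inf le_rfl hle) (by simp)) bot_le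
    rw [hb, hσ.bot_eq]

theorem forward_dir (E : Finset A) (β s : A → ℝ) (hσ' : IsState σ)
    (hσE : ∀ h ∈ E, σ h = β h) :
    ∃ η : A → Bool, IsBAHom η ∧
      0 ≤ ∑ h ∈ E, s h * (β h - if η h then 1 else 0) := by
  classical
  set w : Finset A → ℝ := fun S => σ (S.inf id ⊓ (E \ S).inf Compl.compl) with hw
  set t : Finset A → ℝ := fun S => ∑ h ∈ E, s h * (β h - if h ∈ S then 1 else 0) with htdef
  have hw0 : ∀ S, 0 ≤ w S := fun S => (hσ'.1 _).1
  have hsum1 : ∑ S ∈ E.powerset, w S = 1 := state_total hσ' E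
  have hkey : ∑ S ∈ E.powerset, w S * t S = 0 := by
    have hstep : ∀ S ∈ E.powerset, w S * t S
        = ∑ h ∈ E, (s h * β h * w S - s h * (if h ∈ S then w S else 0)) := by
      intro S hS
      rw [htdef, Finset.mul_sum]
      refine Finset.sum_congr rfl fun h hh => ?_
      by_cases hm : h ∈ S <;> simp [hm] <;> ring
    rw [Finset.sum_congr rfl hstep, Finset.sum_comm]
    refine Finset.sum_eq_zero fun h hh => ?_
    rw [Finset.sum_sub_distrib]
    have e1 : ∑ S ∈ E.powerset, s h * β h * w S = s h * β h := by
      rw [← Finset.mul_sum, hsum1, mul_one]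
    have e2 : ∑ S ∈ E.powerset, s h * (if h ∈ S then w S else 0) = s h * σ h := by
      rw [← Finset.mul_sum, ← state_apply_mem hσ' E hh]
    rw [e1, e2, hσE h hh]
    ring
  have hex : ∃ S ∈ E.powerset, (S.inf id ⊓ (E \ S).inf Compl.compl ≠ ⊥) ∧ 0 ≤ t S := by
    by_contra hc
    push_neg at hc
    have hle : ∀ S ∈ E.powerset, w S * t S ≤ 0 := by
      intro S hS
      by_cases hb : S.inf id ⊓ (E \ S).inf Compl.compl = ⊥
      · simp [hw, hb, hσ'.bot_eq]
      · nlinarith [hw0 S, hc S hS hb]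
    obtain ⟨S0, hS0, hne0⟩ := Finset.exists_ne_zero_of_sum_ne_zero
      (by rw [hsum1]; exact one_ne_zero : ∑ S ∈ E.powerset, w S ≠ 0)
    have hpos : 0 < w S0 := lt_of_le_of_ne (hw0 S0) (Ne.symm hne0)
    have hb0 : S0.inf id ⊓ (E \ S0).inf Compl.compl ≠ ⊥ := by
      intro hb
      apply hne0
      simp [hw, hb, hσ'.bot_eq]
    have hlt : w S0 * t S0 < 0 := mul_neg_of_pos_of_neg hpos (hc S0 hS0 hb0)
    have : ∑ S ∈ E.powerset, w S * t S < 0 := by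
      have := Finset.sum_lt_sum hle ⟨S0, hS0, by simpa using hlt⟩
        (g := fun _ => (0 : ℝ))
      simpa using this
    linarith
  obtain ⟨S, hS, hne, ht⟩ := hex
  obtain ⟨η, hη, hηa⟩ := exists_hom_of_ne_bot hne
  refine ⟨η, hη, ?_⟩
  have hval : ∀ h ∈ E, (if η h then (1:ℝ) else 0) = if h ∈ S then 1 else 0 := by
    intro h hh
    by_cases hm : h ∈ S
    · have : η h = true := hη.mono_true (le_trans inf_le_left (Finset.inf_le hm)) hηa
      simp [hm, this]
    · have hmem : h ∈ E \ S := Finset.mem_sdiff.mpr ⟨hh, hm⟩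
      have h1 : η hᶜ = true :=
        hη.mono_true (le_trans inf_le_right (Finset.inf_le hmem)) hηa
      rw [hη.1] at h1
      have h2 : η h = false := by
        cases hv : η h
        · rfl
        · rw [hv] at h1; exact absurd h1 (by decide)
      simp [hm, h2]
  have : ∑ h ∈ E, s h * (β h - if η h then 1 else 0) = t S :=
    Finset.sum_congr rfl fun h hh => by rw [hval h hh]
  rw [this]
  exact ht

end State

section Backward
variable {A : Type*} [BooleanAlgebra A]

theorem backward_dir (E : Finset A) (β : A → ℝ)
    (hns : ¬ ∃ s : A → ℝ, ∀ η : A → Bool, IsBAHom η →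
      ∑ h ∈ E, s h * (β h - if η h then 1 else 0) < 0) :
    ∃ σ : A → ℝ, IsState σ ∧ ∀ h ∈ E, σ h = β h := by
  classical
  set V : Set ({x // x ∈ E} → ℝ) :=
    {v | ∃ η : A → Bool, IsBAHom η ∧ v = fun i : {x // x ∈ E} => if η ↑i then (1:ℝ) else 0} with hV
  have hVfin : V.Finite := by
    apply Set.Finite.subset (Set.finite_range
      (fun c : {x // x ∈ E} → Bool => fun i => if c i then (1:ℝ) else 0))
    rintro v ⟨η, hη, rfl⟩
    exact ⟨fun i => η i, rfl⟩
  have hb : (fun i : {x // x ∈ E} => β i) ∈ convexHull ℝ V := by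
    by_contra hbn
    obtain ⟨f, u, hfb, hfV⟩ := geometric_hahn_banach_point_closed
      (convex_convexHull ℝ V) (hVfin.isClosed_convexHull (𝕜 := ℝ)) hbn
    apply hns
    refine ⟨fun h => if hh : h ∈ E then f (Pi.single (⟨h, hh⟩ : {x // x ∈ E}) 1) else 0, ?_⟩
    intro η hη
    have hflin : ∀ g : {x // x ∈ E} → ℝ, f g = ∑ i : {x // x ∈ E}, g i * f (Pi.single i 1) := by
      intro g
      conv_lhs => rw [pi_eq_sum_univ g]
      rw [map_sum]
      refine Finset.sum_congr rfl fun i _ => ?_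
      rw [map_smul, smul_eq_mul]
      congr 2
      funext j
      rw [Pi.single_apply]
      by_cases hij : i = j
      · subst hij; simp
      · simp [hij, Ne.symm hij]
    set vη : {x // x ∈ E} → ℝ := fun i : {x // x ∈ E} => if η ↑i then (1:ℝ) else 0 with hvη
    have hVmem : vη ∈ V := ⟨η, hη, rfl⟩
    have hlt : f (fun i : {x // x ∈ E} => β i) < f vη :=
      lt_trans hfb (hfV _ (subset_convexHull ℝ V hVmem))
    have e2 : f (fun i : {x // x ∈ E} => β i) - f vη
        = ∑ i : {x // x ∈ E}, (β i - vη i) * f (Pi.single i 1) := by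
      rw [hflin (fun i => β i), hflin vη, ← Finset.sum_sub_distrib]
      exact Finset.sum_congr rfl fun i _ => by ring
    have e1 : ∑ h ∈ E, (if hh : h ∈ E then
          f (Pi.single (⟨h, hh⟩ : {x // x ∈ E}) 1) else 0) * (β h - if η h then 1 else 0)
        = ∑ i : {x // x ∈ E}, (β i - vη i) * f (Pi.single i 1) := by
      rw [← Finset.sum_attach E (fun h => (if hh : h ∈ E then
        f (Pi.single (⟨h, hh⟩ : {x // x ∈ E}) 1) else 0) * (β h - if η h then 1 else 0)),
        ← Finset.univ_eq_attach]
      refine Finset.sum_congr rfl fun i _ => ?_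
      rw [dif_pos i.2, mul_comm]
    rw [e1, ← e2]
    linarith
  rw [mem_convexHull_iff_exists_fintype] at hb
  obtain ⟨κ, hκ, w, z, hw0, hw1, hzV, hzsum⟩ := hb
  simp only [hV, Set.mem_setOf_eq] at hzV
  choose η hηhom hηval using hzV
  refine ⟨fun x => ∑ k, w k * (if η k x then 1 else 0), ⟨?_, ?_, ?_⟩, ?_⟩
  · intro x
    constructor
    · apply Finset.sum_nonneg
      intro k _
      by_cases hv : η k x <;> simp [hv, hw0 k]
    · calc ∑ k, w k * (if η k x then (1:ℝ) else 0) ≤ ∑ k, w k := by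
            apply Finset.sum_le_sum
            intro k _
            by_cases hv : η k x <;> simp [hv, hw0 k]
        _ = 1 := hw1
  · have htop : ∀ k, (if η k ⊤ then (1:ℝ) else 0) = 1 := fun k => by
      rw [(hηhom k).top_eq]; simp
    calc ∑ k, w k * (if η k ⊤ then (1:ℝ) else 0) = ∑ k, w k := by
          refine Finset.sum_congr rfl fun k _ => ?_
          rw [htop k, mul_one]
      _ = 1 := hw1
  · intro x y hxy
    have hper : ∀ k, w k * (if η k (x ⊔ y) then (1:ℝ) else 0)
        = w k * (if η k x then 1 else 0) + w k * (if η k y then 1 else 0) := by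
      intro k
      have h1 : η k (x ⊔ y) = (η k x ⊔ η k y) := (hηhom k).2.2 x y
      have h2 : η k x ⊓ η k y = false := by
        rw [← (hηhom k).2.1, hxy, (hηhom k).bot_eq]
      cases hx : η k x <;> cases hy : η k y <;> rw [hx, hy] at h1 h2
      · have hb : (false ⊔ false : Bool) = false := by decide
        rw [hb] at h1; rw [h1]; simp
      · have hb : (false ⊔ true : Bool) = true := by decide
        rw [hb] at h1; rw [h1]; simp
      · have hb : (true ⊔ false : Bool) = true := by decide
        rw [hb] at h1; rw [h1]; simp
      · exact absurd h2 (by decide)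
    rw [← Finset.sum_add_distrib]
    exact Finset.sum_congr rfl fun k _ => hper k
  · intro h hh
    have hz := congrFun hzsum ⟨h, hh⟩
    rw [Finset.sum_apply] at hz
    have : ∀ k, (w k • z k) (⟨h, hh⟩ : {x // x ∈ E}) = w k * (if η k h then 1 else 0) := by
      intro k
      rw [Pi.smul_apply, smul_eq_mul, hηval k]
    rw [Finset.sum_congr rfl (fun k _ => this k)] at hz
    exact hz

end Backward

theorem stmt_19 (A : Type*) [BooleanAlgebra A] [Nontrivial A]
    (E : Finset A) (β : A → ℝ) (hβ : ∀ h ∈ E, 0 ≤ β h ∧ β h ≤ 1) :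
    (∃ σ : A → ℝ, IsState σ ∧ ∀ h ∈ E, σ h = β h) ↔
    ¬ ∃ s : A → ℝ, ∀ η : A → Bool, IsBAHom η →
        ∑ h ∈ E, s h * (β h - (if η h then 1 else 0)) < 0 := by
  constructor
  · rintro ⟨σ, hσ, hσE⟩ ⟨s, hs⟩
    obtain ⟨η, hη, hge⟩ := forward_dir E β s hσ hσE
    exact absurd (hs η hη) (not_lt.mpr hge)
  · exact backward_dir E β
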